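/- For all integers n ≥ 1 and s ≥ 1, F_{2sn} − (−1)^s·F_{2s(n−1)} = F_s·L_{s(2n−1)}. -/
import Mathlib


def lucas : ℕ → ℕ
  | 0 => 2
  | 1 => 1
  | n + 2 => lucas (n + 1) + lucas n

lemma lucas_eq_fib : ∀ d : ℕ, lucas (d + 1) = Nat.fib d + Nat.fib (d + 2) := by
  intro d
  induction d using Nat.twoStepInduction with
  | zero => rfl
  | one => rfl
  | more d ih1 ih2 =>
    show lucas (d + 2) + lucas (d + 1) = _
    rw [ih1, ih2, Nat.fib_add_two (n := d + 2), Nat.fib_add_two (n := d)]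
    ring

lemma key : ∀ k d : ℕ, (Nat.fib (2 * k + d) : ℤ) - (-1) ^ k * Nat.fib d
    = (Nat.fib k : ℤ) * lucas (k + d) := by
  intro k
  induction k using Nat.twoStepInduction with
  | zero => intro d; simp
  | one =>
    intro d
    have h : 2 * 1 + d = d + 2 := by ring
    have h' : 1 + d = d + 1 := by ring
    rw [h, h', lucas_eq_fib d]
    push_cast
    ring
  | more k ih1 ih2 =>
    intro d
    have h1 := ih1 (d + 2)
    have h2 := ih2 (d + 1)
    have e1 : 2 * (k + 2) + d = (2 * k + (d + 2)) + 2 := by ring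
    have e2 : 2 * (k + 1) + (d + 1) = (2 * k + (d + 2)) + 1 := by ring
    rw [e2] at h2
    have e3 : k + 2 + d = k + (d + 2) := by ring
    have e4 : k + 1 + (d + 1) = k + (d + 2) := by ring
    rw [e1, Nat.fib_add_two, Nat.fib_add_two (n := k), e3]
    rw [Nat.fib_add_two (n := d)] at h1
    rw [e4] at h2
    have s1 : ((-1 : ℤ)) ^ (k + 1) = -(-1) ^ k := by ring
    have s2 : ((-1 : ℤ)) ^ (k + 2) = (-1) ^ k := by ring
    rw [s1] at h2
    rw [s2]
    push_cast at h1 h2 ⊢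
    linarith

theorem stmt19 (n s : ℕ) (hn : 1 ≤ n) (hs : 1 ≤ s) :
    (Nat.fib (2 * s * n) : ℤ) - (-1) ^ s * (Nat.fib (2 * s * (n - 1)) : ℤ) =
      (Nat.fib s : ℤ) * (lucas (s * (2 * n - 1)) : ℤ) := by
  obtain ⟨m, rfl⟩ := Nat.exists_eq_add_of_le hn
  have h1 : 2 * s * (1 + m) = 2 * s + 2 * s * m := by ring
  have h2 : 1 + m - 1 = m := by omega
  have h3 : s * (2 * (1 + m) - 1) = s + 2 * s * m := by
    have : 2 * (1 + m) - 1 = 2 * m + 1 := by omega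
    rw [this]; ring
  rw [h1, h2, h3]
  exact key s (2 * s * m)
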